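/- Let T : [0,1] → ℝ be the Takagi (Blancmange) function T(x) = ∑_{i=0}^{∞} 2^{−i} · s(2^i x), where s(x) is the distance from x to the nearest integer. Define c : ℕ → ℕ by c(1) = 0, c(2n) = 2·c(n), c(2n+1) = c(n+1) + c(n) + 1, and let k_n = ⌈log₂ n⌉. Then for every n ≥ 1, c(n) = 2^{k_n − 1} · T(n / 2^{k_n − 1} − 1). -/

import Mathlib

/-- The distance from a real number to the nearest integer. -/
noncomputable def nearestIntDist (x : ℝ) : ℝ := ⨅ z : ℤ, |x - (z : ℝ)|

lemma nearestIntDist_eq (x : ℝ) :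
    nearestIntDist x = min (Int.fract x) (1 - Int.fract x) := by
  have hb : BddBelow (Set.range fun z : ℤ => |x - (z : ℝ)|) :=
    ⟨0, by rintro y ⟨z, rfl⟩; positivity⟩
  apply le_antisymm
  · rcases le_total (Int.fract x) (1 - Int.fract x) with h | h
    · calc nearestIntDist x ≤ |x - (⌊x⌋ : ℝ)| := ciInf_le hb ⌊x⌋
        _ = Int.fract x := by
          rw [abs_of_nonneg (by have := Int.floor_le x; linarith), Int.fract]
        _ = min _ _ := (min_eq_left h).symm
    · calc nearestIntDist x ≤ |x - ((⌊x⌋ + 1 : ℤ) : ℝ)| := ciInf_le hb (⌊x⌋ + 1)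
        _ = 1 - Int.fract x := by
          push_cast
          rw [abs_of_nonpos (by have := Int.lt_floor_add_one x; linarith),
            Int.fract]
          ring
        _ = min _ _ := (min_eq_right h).symm
  · apply le_ciInf
    intro z
    rcases le_or_gt (z : ℝ) (⌊x⌋ : ℝ) with h | h
    · refine le_trans (min_le_left _ _) ?_
      have hf := Int.floor_le x
      rw [abs_of_nonneg (by linarith), Int.fract]
      linarith
    · have hz0 : ⌊x⌋ < z := by exact_mod_cast h
      have hz' : ⌊x⌋ + 1 ≤ z := by omega
      have hz : (⌊x⌋ : ℝ) + 1 ≤ z := by exact_mod_cast hz'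
      refine le_trans (min_le_right _ _) ?_
      have hf := Int.lt_floor_add_one x
      rw [Int.fract, abs_sub_comm, abs_of_nonneg (by linarith)]
      linarith

lemma nearestIntDist_nonneg (x : ℝ) : 0 ≤ nearestIntDist x := by
  rw [nearestIntDist_eq]
  have h1 := Int.fract_nonneg x
  have h2 := Int.fract_lt_one x
  simp only [le_min_iff]; constructor <;> linarith

lemma nearestIntDist_le_half (x : ℝ) : nearestIntDist x ≤ 1/2 := by
  rw [nearestIntDist_eq]
  rcases le_total (Int.fract x) (1/2) with h | h
  · exact le_trans (min_le_left _ _) h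
  · exact le_trans (min_le_right _ _) (by linarith)

lemma nearestIntDist_add_int (x : ℝ) (z : ℤ) : nearestIntDist (x + z) = nearestIntDist x := by
  rw [nearestIntDist_eq, nearestIntDist_eq, Int.fract_add_intCast]

lemma nearestIntDist_neg (x : ℝ) : nearestIntDist (-x) = nearestIntDist x := by
  rw [nearestIntDist_eq, nearestIntDist_eq]
  rcases eq_or_ne (Int.fract x) 0 with h | h
  · rw [Int.fract_neg_eq_zero.mpr h, h]
  · rw [Int.fract_neg h]; rw [min_comm]; ring_nf

lemma nearestIntDist_zero : nearestIntDist 0 = 0 := by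
  rw [nearestIntDist_eq]; simp

lemma nearestIntDist_int (z : ℤ) : nearestIntDist z = 0 := by
  rw [show (z : ℝ) = 0 + z by ring, nearestIntDist_add_int, nearestIntDist_zero]

/-- The Takagi (Blancmange) function. -/
noncomputable def takagi (x : ℝ) : ℝ := ∑' i : ℕ, nearestIntDist (2 ^ i * x) / 2 ^ i

lemma takagi_summable (x : ℝ) :
    Summable (fun i : ℕ => nearestIntDist (2 ^ i * x) / 2 ^ i) := by
  apply Summable.of_nonneg_of_le (fun i => div_nonneg (nearestIntDist_nonneg _) (by positivity))
    (fun i => ?_) (summable_geometric_two.mul_left (1/2))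
  have h := nearestIntDist_le_half (2 ^ i * x)
  have h2 : (0:ℝ) < 2 ^ i := by positivity
  rw [div_le_iff₀ h2] at *
  calc nearestIntDist (2 ^ i * x) ≤ 1/2 := h
    _ ≤ 1/2 * (1/2)^i * 2^i := by
        rw [mul_assoc, ← mul_pow]; norm_num
  -- fallback
lemma takagi_add_int (x : ℝ) (z : ℤ) : takagi (x + z) = takagi x := by
  unfold takagi
  congr 1; funext i
  rw [mul_add, show (2:ℝ)^i * z = ((2^i * z : ℤ) : ℝ) by push_cast; ring,
    nearestIntDist_add_int]

lemma takagi_neg (x : ℝ) : takagi (-x) = takagi x := by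
  unfold takagi
  congr 1; funext i
  rw [mul_neg, nearestIntDist_neg]

lemma takagi_zero : takagi 0 = 0 := by
  unfold takagi
  simp [nearestIntDist_zero]

lemma takagi_one_sub (x : ℝ) : takagi (1 - x) = takagi x := by
  rw [show (1:ℝ) - x = -x + (1:ℤ) by push_cast; ring, takagi_add_int, takagi_neg]

lemma takagi_one : takagi 1 = 0 := by
  rw [show (1:ℝ) = 1 - 0 by ring, takagi_one_sub, takagi_zero]

lemma takagi_rec (x : ℝ) : takagi x = nearestIntDist x + takagi (2 * x) / 2 := by
  unfold takagi
  rw [Summable.tsum_eq_zero_add (takagi_summable x)]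
  simp only [pow_zero, one_mul, pow_succ, div_one]
  rw [← tsum_div_const]
  congr 2
  funext i
  rw [show (2:ℝ)^i * 2 * x = 2^i * (2*x) by ring]
  ring

lemma takagi_half {x : ℝ} (h0 : 0 ≤ x) (h1 : x ≤ 1) :
    takagi (x / 2) = x / 2 + takagi x / 2 := by
  rw [takagi_rec (x/2), show 2 * (x/2) = x by ring]
  congr 1
  rw [nearestIntDist_eq]
  rcases eq_or_lt_of_le h1 with rfl | h1
  · norm_num [Int.fract]
  · have hf : Int.fract (x/2) = x/2 := by
      rw [Int.fract_eq_self]; constructor <;> linarith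
    rw [hf, min_eq_left (by linarith)]

lemma takagi_midpoint : ∀ r : ℕ, ∀ j : ℕ, j < 2^r →
    takagi ((2*(j:ℝ)+1)/2^(r+1)) =
      (takagi ((j:ℝ)/2^r) + takagi (((j:ℝ)+1)/2^r))/2 + 1/2^(r+1) := by
  intro r
  induction r with
  | zero =>
    intro j hj
    interval_cases j
    have h := takagi_half (x := 1) zero_le_one le_rfl
    rw [takagi_one] at h
    norm_num [takagi_zero, takagi_one]
    linarith
  | succ r ih =>
    have hleft : ∀ j : ℕ, j < 2^r → takagi ((2*(j:ℝ)+1)/2^(r+1+1)) =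
        (takagi ((j:ℝ)/2^(r+1)) + takagi (((j:ℝ)+1)/2^(r+1)))/2 + 1/2^(r+1+1) := by
      intro j hj
      have hjR : (j:ℝ) + 1 ≤ 2^r := by
        have : (j:ℕ) + 1 ≤ 2^r := hj
        exact_mod_cast this
      have hp : (0:ℝ) < 2^r := by positivity
      have e1 : ((2*(j:ℝ)+1)/2^(r+1+1)) = ((2*(j:ℝ)+1)/2^(r+1))/2 := by ring
      have h1 := takagi_half (x := (2*(j:ℝ)+1)/2^(r+1)) (by positivity)
        (by rw [div_le_one (by positivity)]; rw [pow_succ]; nlinarith)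
      have h2 := takagi_half (x := (j:ℝ)/2^r) (by positivity)
        (by rw [div_le_one hp]; linarith)
      have h3 := takagi_half (x := ((j:ℝ)+1)/2^r) (by positivity)
        (by rw [div_le_one hp]; linarith)
      have e2 : (j:ℝ)/2^(r+1) = ((j:ℝ)/2^r)/2 := by rw [pow_succ]; ring
      have e3 : ((j:ℝ)+1)/2^(r+1) = (((j:ℝ)+1)/2^r)/2 := by rw [pow_succ]; ring
      rw [e1, h1, ih j hj, e2, h2, e3, h3]
      field_simp
      ring
    intro j hj
    rcases lt_or_ge j (2^r) with h | h
    · exact hleft j h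
    · have h2r : 2^(r+1) = 2*2^r := by rw [pow_succ]; ring
      set js := 2^(r+1) - 1 - j with hjs
      have hsum : j + js + 1 = 2^(r+1) := by omega
      have hjslt : js < 2^r := by omega
      have hcast : (j:ℝ) + (js:ℝ) + 1 = 2^(r+1) := by exact_mod_cast hsum
      have hpp : (0:ℝ) < 2^(r+1+1) := by positivity
      have hq : (0:ℝ) < 2^(r+1) := by positivity
      have hdd : (2:ℝ)^(r+1+1) = 2 * 2^(r+1) := by rw [pow_succ]; ring
      have e1 : (2*(j:ℝ)+1)/2^(r+1+1) = 1 - (2*(js:ℝ)+1)/2^(r+1+1) := by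
        field_simp; linarith
      have e2 : (j:ℝ)/2^(r+1) = 1 - ((js:ℝ)+1)/2^(r+1) := by
        field_simp; linarith
      have e3 : ((j:ℝ)+1)/2^(r+1) = 1 - (js:ℝ)/2^(r+1) := by
        field_simp; linarith
      rw [e1, takagi_one_sub, e2, takagi_one_sub, e3, takagi_one_sub,
        hleft js hjslt]
      ring

lemma my_le_pow_clog (n : ℕ) : n ≤ 2 ^ Nat.clog 2 n := by
  rcases Nat.eq_zero_or_pos n with rfl | h
  · exact Nat.zero_le _
  · exact (Nat.clog_le_iff_le_pow one_lt_two).mp le_rfl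

lemma my_pow_pred_lt (n : ℕ) (hn : 2 ≤ n) : 2 ^ (Nat.clog 2 n - 1) < n :=
  Nat.pow_pred_clog_lt_self one_lt_two hn

lemma clog_double (n : ℕ) (hn : 1 ≤ n) : Nat.clog 2 (2*n) = Nat.clog 2 n + 1 := by
  apply le_antisymm
  · rw [Nat.clog_le_iff_le_pow one_lt_two, pow_succ]
    have := my_le_pow_clog n
    omega
  · rw [Nat.succ_le_iff, Nat.lt_clog_iff_pow_lt one_lt_two]
    rcases Nat.lt_or_ge n 2 with h | h
    · interval_cases n
      · simp [Nat.clog_one_right]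
    · have h1 := my_pow_pred_lt n h
      have h2 : 0 < Nat.clog 2 n := Nat.clog_pos one_lt_two h
      have h3 : 2 ^ Nat.clog 2 n = 2 * 2 ^ (Nat.clog 2 n - 1) := by
        conv_lhs => rw [← Nat.sub_add_cancel h2]
        rw [pow_succ]; ring
      omega

lemma clog_odd (n : ℕ) (hn : 1 ≤ n) :
    Nat.clog 2 (2*n+1) = Nat.clog 2 (n+1) + 1 := by
  apply le_antisymm
  · rw [Nat.clog_le_iff_le_pow one_lt_two, pow_succ]
    have := my_le_pow_clog (n+1)
    omega
  · rw [Nat.succ_le_iff, Nat.lt_clog_iff_pow_lt one_lt_two]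
    have h1 := my_pow_pred_lt (n+1) (by omega)
    have h2 : 0 < Nat.clog 2 (n+1) := Nat.clog_pos one_lt_two (by omega)
    have h3 : 2 ^ Nat.clog 2 (n+1) = 2 * 2 ^ (Nat.clog 2 (n+1) - 1) := by
      conv_lhs => rw [← Nat.sub_add_cancel h2]
      rw [pow_succ]; ring
    omega

lemma clog_eq_succ (m e : ℕ) (h1 : 2^e < m) (h2 : m ≤ 2^(e+1)) :
    Nat.clog 2 m = e + 1 := by
  apply le_antisymm
  · rw [Nat.clog_le_iff_le_pow one_lt_two]; exact h2
  · rw [Nat.succ_le_iff, Nat.lt_clog_iff_pow_lt one_lt_two]; exact h1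

theorem minColless_takagi (c : ℕ → ℕ) (h1 : c 1 = 0)
    (heven : ∀ n : ℕ, 1 ≤ n → c (2 * n) = 2 * c n)
    (hodd : ∀ n : ℕ, 1 ≤ n → c (2 * n + 1) = c (n + 1) + c n + 1) :
    ∀ n : ℕ, 1 ≤ n →
      (c n : ℝ) =
        2 ^ (Nat.clog 2 n - 1) * takagi ((n : ℝ) / 2 ^ (Nat.clog 2 n - 1) - 1) := by
  have hpow : ∀ r : ℕ, c (2^r) = 0 := by
    intro r
    induction r with
    | zero => simpa using h1
    | succ r ih =>
      rw [pow_succ, mul_comm, heven _ (Nat.one_le_two_pow), ih]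
  intro n
  induction n using Nat.strong_induction_on with
  | _ n IH =>
    intro hn
    rcases Nat.lt_or_ge n 2 with h2 | h2
    · interval_cases n
      simp [h1, Nat.clog_one_right, takagi_zero]
    rcases Nat.even_or_odd n with he | ho
    · -- even case
      obtain ⟨m, hm⟩ := he
      have hm' : n = 2 * m := by omega
      have hm1 : 1 ≤ m := by omega
      subst hm'
      rcases Nat.lt_or_ge m 2 with hm2 | hm2
      · interval_cases m
        rw [heven 1 le_rfl, h1]
        have hc : Nat.clog 2 (2*1) = 1 := by
          rw [clog_double 1 le_rfl, Nat.clog_one_right]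
        rw [hc]
        norm_num [takagi_one]
      · have hk : 0 < Nat.clog 2 m := Nat.clog_pos one_lt_two hm2
        obtain ⟨e, he⟩ : ∃ e, Nat.clog 2 m = e + 1 := ⟨_, (Nat.sub_add_cancel hk).symm⟩
        rw [clog_double m hm1, heven m hm1]
        push_cast
        rw [IH m (by omega) hm1, he, Nat.add_sub_cancel]
        have hp : (0:ℝ) < 2^e := by positivity
        have harg : (2*(m:ℝ))/2^(e+1) - 1 = (m:ℝ)/2^e - 1 := by
          rw [pow_succ]
          field_simp
        rw [harg, pow_succ]
        ring
    · -- odd case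
      obtain ⟨m, hm⟩ := ho
      have hm1 : 1 ≤ m := by omega
      subst hm
      have hk : 0 < Nat.clog 2 (m+1) := Nat.clog_pos one_lt_two (by omega)
      obtain ⟨e, he⟩ : ∃ e, Nat.clog 2 (m+1) = e + 1 := ⟨_, (Nat.sub_add_cancel hk).symm⟩
      have hub : m + 1 ≤ 2^(e+1) := by rw [← he]; exact my_le_pow_clog (m+1)
      have hlb : 2^e < m + 1 := by
        have := my_pow_pred_lt (m+1) (by omega)
        rwa [he, Nat.add_sub_cancel] at this
      have hpw : 2^(e+1) = 2*2^e := by rw [pow_succ]; ring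
      set j := m - 2^e with hjdef
      have hmj : m = 2^e + j := by omega
      have hjlt : j < 2^e := by omega
      have hp : (0:ℝ) < 2^e := by positivity
      have hmjR : (m:ℝ) = 2^e + j := by exact_mod_cast hmj
      rw [clog_odd m hm1, he, Nat.add_sub_cancel, hodd m hm1]
      push_cast
      -- c (m+1)
      have hcm1 : (c (m+1) : ℝ) = 2^e * takagi (((j:ℝ)+1)/2^e) := by
        rw [IH (m+1) (by omega) (by omega), he, Nat.add_sub_cancel]
        congr 2
        push_cast
        rw [hmjR]
        field_simp
        ring
      -- c m
      have hcm : (c m : ℝ) = 2^e * takagi ((j:ℝ)/2^e) := by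
        rcases Nat.eq_zero_or_pos j with hj0 | hj0
        · rw [hmj, hj0]
          simp [hpow e, takagi_zero]
        · have hcl : Nat.clog 2 m = e + 1 := clog_eq_succ m e (by omega) (by omega)
          rw [IH m (by omega) hm1, hcl, Nat.add_sub_cancel]
          congr 2
          rw [hmjR]
          field_simp
          ring
      rw [hcm1, hcm]
      have hmid := takagi_midpoint e j hjlt
      have harg : ((2*m+1 : ℝ))/2^(e+1) - 1 = (2*(j:ℝ)+1)/2^(e+1) := by
        rw [hmjR, pow_succ]
        field_simp
        ring
      rw [harg, hmid, pow_succ]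
      field_simp
      ring
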